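/- With the same notation, for every initial g ∈ t·B_{ℓ∞(S_E)}, div(Tⁿ g) converges to ψ̃ = u₀ − u_opt as n → ∞, where u_opt is the exact minimizer of the graph ROF functional (1/2)‖u₀ − u‖²_{ℓ²(S_V)} + t‖grad u‖_{ℓ¹(S_E)}. -/

import Mathlib

set_option linter.unusedSectionVars false
set_option linter.unusedVariables false
set_option maxHeartbeats 1000000


/-- Gradient operator on a directed graph with edge source/target maps. -/
def grad {V E : Type*} (src tgt : E → V) (f : V → ℝ) : E → ℝ :=
  fun e => f (tgt e) - f (src e)

/-- Divergence operator on a directed graph: incoming minus outgoing flow. -/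
def gdiv {V E : Type*} [Fintype E] [DecidableEq V] (src tgt : E → V) (g : E → ℝ) : V → ℝ :=
  fun v => (∑ e : E, if tgt e = v then g e else 0) - (∑ e : E, if src e = v then g e else 0)

/-- Connectedness of the underlying undirected graph. -/
def GConnected {V E : Type*} (src tgt : E → V) : Prop :=
  ∀ v w : V, Relation.ReflTransGen
    (fun a b => ∃ e : E, (src e = a ∧ tgt e = b) ∨ (src e = b ∧ tgt e = a)) v w

/-- Projection (clamp) of `x` onto the interval `[-t, t]`. -/
noncomputable def clamp (t x : ℝ) : ℝ := max (-t) (min t x)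

/-- Divergence ignoring the flow on the edge `k`. -/
def divWo {V E : Type*} [Fintype E] [DecidableEq V] (src tgt : E → V) (k : E)
    (g : E → ℝ) : V → ℝ :=
  fun v => gdiv src tgt g v + (if src k = v then g k else 0) - (if tgt k = v then g k else 0)

/-- The optimal new value for the flow on the edge `k` before clamping. -/
noncomputable def Kg {V E : Type*} [Fintype E] [DecidableEq V] (src tgt : E → V) (u₀ : V → ℝ)
    (g : E → ℝ) (k : E) : ℝ :=
  ((u₀ (tgt k) - divWo src tgt k g (tgt k)) - (u₀ (src k) - divWo src tgt k g (src k))) / 2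

/-- The single-edge coordinate-descent update operator `T_k`. -/
noncomputable def Tk {V E : Type*} [Fintype E] [DecidableEq V] [DecidableEq E]
    (src tgt : E → V) (u₀ : V → ℝ) (t : ℝ) (k : E) (g : E → ℝ) : E → ℝ :=
  Function.update g k (clamp t (Kg src tgt u₀ g k))

section Aux
variable {V E : Type*} [Fintype V] [Fintype E] [DecidableEq V] [DecidableEq E]
  (src tgt : E → V) (u₀ : V → ℝ) (t : ℝ)

/-- The dual objective. -/
noncomputable def FF (h : E → ℝ) : ℝ := ∑ v : V, (u₀ v - gdiv src tgt h v) ^ 2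

lemma clamp_mem (ht : 0 ≤ t) (m : ℝ) : |clamp t m| ≤ t := by
  rw [abs_le]
  unfold clamp
  constructor
  · exact le_max_left _ _
  · exact max_le (by linarith) (min_le_left _ _)

lemma clamp_spec (ht : 0 ≤ t) (m y : ℝ) (hy : |y| ≤ t) :
    (clamp t m - m) ^ 2 ≤ (y - m) ^ 2 ∧ ((y - m) ^ 2 ≤ (clamp t m - m) ^ 2 → y = clamp t m) := by
  rw [abs_le] at hy
  unfold clamp
  rcases le_total m (-t) with h1 | h1
  · rw [min_eq_right (by linarith), max_eq_left (by linarith)]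
    constructor
    · nlinarith
    · intro h; nlinarith
  · rcases le_total t m with h2 | h2
    · rw [min_eq_left h2, max_eq_right (by linarith)]
      constructor
      · nlinarith
      · intro h; nlinarith
    · rw [min_eq_right h2, max_eq_right h1]
      constructor
      · nlinarith
      · intro h; nlinarith

lemma gdiv_update (h : E → ℝ) (k : E) (x : ℝ) (v : V) :
    gdiv src tgt (Function.update h k x) v
      = gdiv src tgt h v + (if tgt k = v then x - h k else 0)
        - (if src k = v then x - h k else 0) := by
  unfold gdiv
  have key : ∀ st : E → V,
      (∑ e : E, if st e = v then Function.update h k x e else 0)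
        = (∑ e : E, if st e = v then h e else 0) + (if st k = v then x - h k else 0) := by
    intro st
    have : ∀ e : E, (if st e = v then Function.update h k x e else 0)
        = (if st e = v then h e else 0) + (if e = k then (if st k = v then x - h k else 0) else 0) := by
      intro e
      rcases eq_or_ne e k with rfl | hek
      · simp [Function.update_self]
        split_ifs <;> ring
      · simp [Function.update_of_ne hek, hek]
    rw [Finset.sum_congr rfl fun e _ => this e, Finset.sum_add_distrib]
    congr 1
    rw [Finset.sum_ite_eq' Finset.univ k (fun _ => if st k = v then x - h k else 0)]
    simp
  rw [key src, key tgt]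
  ring

lemma gdiv_update_self (h : E → ℝ) (k : E) (x : ℝ) (hk : src k = tgt k) :
    gdiv src tgt (Function.update h k x) = gdiv src tgt h := by
  funext v
  rw [gdiv_update, hk]
  ring

lemma Kg_congr (h₁ h₂ : E → ℝ) (k : E) (hd : gdiv src tgt h₁ = gdiv src tgt h₂)
    (hk : h₁ k = h₂ k) : Kg src tgt u₀ h₁ k = Kg src tgt u₀ h₂ k := by
  unfold Kg divWo
  rw [hd, hk]

lemma Kg_self (h : E → ℝ) (k : E) (hk : src k = tgt k) : Kg src tgt u₀ h k = 0 := by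
  unfold Kg divWo
  rw [hk]
  ring

lemma Kg_eq (h : E → ℝ) (k : E) (hk : src k ≠ tgt k) :
    Kg src tgt u₀ h k
      = ((u₀ (tgt k) - gdiv src tgt h (tgt k)) - (u₀ (src k) - gdiv src tgt h (src k))) / 2
        + h k := by
  unfold Kg divWo
  simp [hk, Ne.symm hk]
  ring

lemma FF_update (h : E → ℝ) (k : E) (x : ℝ) :
    FF src tgt u₀ (Function.update h k x)
      = FF src tgt u₀ h + (if src k = tgt k then 0
          else 2 * ((x - Kg src tgt u₀ h k) ^ 2 - (h k - Kg src tgt u₀ h k) ^ 2)) := by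
  set r : V → ℝ := fun v => u₀ v - gdiv src tgt h v with hr
  have expand : FF src tgt u₀ (Function.update h k x)
      = ∑ v : V, ((r v) ^ 2
          - 2 * r v * ((if tgt k = v then x - h k else 0) - (if src k = v then x - h k else 0))
          + ((if tgt k = v then x - h k else 0) - (if src k = v then x - h k else 0)) ^ 2) := by
    unfold FF
    refine Finset.sum_congr rfl fun v _ => ?_
    rw [gdiv_update]
    simp only [hr]
    ring
  rw [expand]
  rw [Finset.sum_add_distrib, Finset.sum_sub_distrib]
  have s1 : ∑ v : V, 2 * r v * ((if tgt k = v then x - h k else 0) - (if src k = v then x - h k else 0))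
      = 2 * (x - h k) * (r (tgt k) - r (src k)) := by
    have : ∀ v : V, 2 * r v * ((if tgt k = v then x - h k else 0) - (if src k = v then x - h k else 0))
        = (if tgt k = v then 2 * (x - h k) * r v else 0) - (if src k = v then 2 * (x - h k) * r v else 0) := by
      intro v; split_ifs <;> ring
    rw [Finset.sum_congr rfl fun v _ => this v, Finset.sum_sub_distrib,
      Finset.sum_ite_eq Finset.univ (tgt k) (fun v => 2 * (x - h k) * r v),
      Finset.sum_ite_eq Finset.univ (src k) (fun v => 2 * (x - h k) * r v)]
    simp
    ring
  have s2 : ∑ v : V, ((if tgt k = v then x - h k else 0) - (if src k = v then x - h k else 0)) ^ 2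
      = (if src k = tgt k then 0 else 2 * (x - h k) ^ 2) := by
    rcases eq_or_ne (src k) (tgt k) with he | he
    · rw [if_pos he]
      refine Finset.sum_eq_zero fun v _ => ?_
      rw [he]
      ring
    · rw [if_neg he]
      have : ∀ v : V, ((if tgt k = v then x - h k else 0) - (if src k = v then x - h k else 0)) ^ 2
          = (if tgt k = v then (x - h k) ^ 2 else 0) + (if src k = v then (x - h k) ^ 2 else 0) := by
        intro v
        rcases eq_or_ne (tgt k) v with h1 | h1 <;> rcases eq_or_ne (src k) v with h2 | h2
        · exact absurd (h2.trans h1.symm) he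
        all_goals simp [h1, h2]
        all_goals try ring
      rw [Finset.sum_congr rfl fun v _ => this v, Finset.sum_add_distrib,
        Finset.sum_ite_eq Finset.univ (tgt k) (fun _ => (x - h k) ^ 2),
        Finset.sum_ite_eq Finset.univ (src k) (fun _ => (x - h k) ^ 2)]
      simp
      ring
  rw [s1, s2]
  rcases eq_or_ne (src k) (tgt k) with he | he
  · rw [if_pos he, if_pos he]
    have : r (tgt k) - r (src k) = 0 := by rw [he]; ring
    rw [this]
    unfold FF
    simp only [hr]
    ring
  · rw [if_neg he, if_neg he]
    have hKg : Kg src tgt u₀ h k = (r (tgt k) - r (src k)) / 2 + h k := by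
      rw [Kg_eq src tgt u₀ h k he]
    rw [hKg]
    unfold FF
    simp only [hr]
    ring


/-- One full sweep. -/
noncomputable def Sw (ℓ : List E) (h : E → ℝ) : E → ℝ :=
  ℓ.foldl (fun h' k => Tk src tgt u₀ t k h') h

lemma Sw_cons (k : E) (ℓ : List E) (h : E → ℝ) :
    Sw src tgt u₀ t (k :: ℓ) h = Sw src tgt u₀ t ℓ (Tk src tgt u₀ t k h) := rfl

lemma Tk_mem (ht : 0 < t) (k : E) (h : E → ℝ) (hh : ∀ e, |h e| ≤ t) :
    ∀ e, |Tk src tgt u₀ t k h e| ≤ t := by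
  intro e
  unfold Tk
  rcases eq_or_ne e k with rfl | hek
  · rw [Function.update_self]
    exact clamp_mem t ht.le _
  · rw [Function.update_of_ne hek]
    exact hh e

lemma FF_Tk_le (ht : 0 < t) (k : E) (h : E → ℝ) (hh : ∀ e, |h e| ≤ t) :
    FF src tgt u₀ (Tk src tgt u₀ t k h) ≤ FF src tgt u₀ h := by
  unfold Tk
  rw [FF_update]
  rcases eq_or_ne (src k) (tgt k) with he | he
  · rw [if_pos he]; linarith
  · rw [if_neg he]
    have := (clamp_spec t ht.le (Kg src tgt u₀ h k) (h k) (hh k)).1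
    nlinarith

lemma Sw_mem (ht : 0 < t) (ℓ : List E) (h : E → ℝ) (hh : ∀ e, |h e| ≤ t) :
    ∀ e, |Sw src tgt u₀ t ℓ h e| ≤ t := by
  induction ℓ generalizing h with
  | nil => exact hh
  | cons k ℓ ih =>
    rw [Sw_cons]
    exact ih _ (Tk_mem src tgt u₀ t ht k h hh)

lemma FF_Sw_le (ht : 0 < t) (ℓ : List E) (h : E → ℝ) (hh : ∀ e, |h e| ≤ t) :
    FF src tgt u₀ (Sw src tgt u₀ t ℓ h) ≤ FF src tgt u₀ h := by
  induction ℓ generalizing h with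
  | nil => exact le_rfl
  | cons k ℓ ih =>
    rw [Sw_cons]
    calc FF src tgt u₀ (Sw src tgt u₀ t ℓ (Tk src tgt u₀ t k h))
        ≤ FF src tgt u₀ (Tk src tgt u₀ t k h) := ih _ (Tk_mem src tgt u₀ t ht k h hh)
      _ ≤ FF src tgt u₀ h := FF_Tk_le src tgt u₀ t ht k h hh

lemma Sw_not_mem (ℓ : List E) (h : E → ℝ) (e : E) (he : e ∉ ℓ) :
    Sw src tgt u₀ t ℓ h e = h e := by
  induction ℓ generalizing h with
  | nil => rfl
  | cons k ℓ ih =>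
    rw [Sw_cons, ih _ (fun hc => he (List.mem_cons_of_mem _ hc))]
    unfold Tk
    exact Function.update_of_ne (by rintro rfl; exact he List.mem_cons_self) _ _

lemma Sw_eq_analysis (ht : 0 < t) (ℓ : List E) (hnd : ℓ.Nodup) (h : E → ℝ)
    (hh : ∀ e, |h e| ≤ t)
    (heq : FF src tgt u₀ (Sw src tgt u₀ t ℓ h) = FF src tgt u₀ h) :
    gdiv src tgt (Sw src tgt u₀ t ℓ h) = gdiv src tgt h ∧
      ∀ k ∈ ℓ, src k ≠ tgt k → h k = clamp t (Kg src tgt u₀ h k) := by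
  induction ℓ generalizing h with
  | nil => exact ⟨rfl, fun k hk => absurd hk List.not_mem_nil⟩
  | cons k ℓ ih =>
    rw [List.nodup_cons] at hnd
    rw [Sw_cons] at heq ⊢
    set h' := Tk src tgt u₀ t k h with hh'
    have hmem' : ∀ e, |h' e| ≤ t := Tk_mem src tgt u₀ t ht k h hh
    have h1 : FF src tgt u₀ (Sw src tgt u₀ t ℓ h') ≤ FF src tgt u₀ h' :=
      FF_Sw_le src tgt u₀ t ht ℓ h' hmem'
    have h2 : FF src tgt u₀ h' ≤ FF src tgt u₀ h := FF_Tk_le src tgt u₀ t ht k h hh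
    have h3 : FF src tgt u₀ h' = FF src tgt u₀ h := le_antisymm h2 (by linarith [heq ▸ h1])
    have h4 : FF src tgt u₀ (Sw src tgt u₀ t ℓ h') = FF src tgt u₀ h' := by linarith
    obtain ⟨ihd, ihk⟩ := ih hnd.2 h' hmem' h4
    rcases eq_or_ne (src k) (tgt k) with he | he
    · -- self-loop: h' = update h k 0, gdiv unchanged, Kg of j ≠ k unchanged
      have hdiv' : gdiv src tgt h' = gdiv src tgt h := by
        rw [hh']; unfold Tk; exact gdiv_update_self src tgt h k _ he
      refine ⟨by rw [ihd, hdiv'], fun j hj hje => ?_⟩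
      rcases List.mem_cons.mp hj with rfl | hj'
      · exact absurd he hje
      · have hjk : j ≠ k := fun hc => hnd.1 (hc ▸ hj')
        have hval : h' j = h j := by
          rw [hh']; unfold Tk; exact Function.update_of_ne hjk _ _
        have hKg : Kg src tgt u₀ h' j = Kg src tgt u₀ h j :=
          Kg_congr src tgt u₀ h' h j hdiv' hval
        rw [← hval, ← hKg]
        exact ihk j hj' hje
    · -- real edge: FF equality forces the update to be trivial
      have hfix : h k = clamp t (Kg src tgt u₀ h k) := by
        have := FF_update src tgt u₀ h k (clamp t (Kg src tgt u₀ h k))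
        rw [if_neg he] at this
        have hTk : FF src tgt u₀ h' = FF src tgt u₀ h
            + 2 * ((clamp t (Kg src tgt u₀ h k) - Kg src tgt u₀ h k) ^ 2
              - (h k - Kg src tgt u₀ h k) ^ 2) := by
          rw [hh']; unfold Tk; exact this
        have hsq : (h k - Kg src tgt u₀ h k) ^ 2
            ≤ (clamp t (Kg src tgt u₀ h k) - Kg src tgt u₀ h k) ^ 2 := by
          nlinarith [h3, hTk]
        exact (clamp_spec t ht.le (Kg src tgt u₀ h k) (h k) (hh k)).2 hsq
      have hup : h' = h := by
        rw [hh']; unfold Tk; rw [← hfix]; exact Function.update_eq_self k h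
      refine ⟨by rw [hup] at ihd ⊢; exact ihd, fun j hj hje => ?_⟩
      rcases List.mem_cons.mp hj with rfl | hj'
      · exact hfix
      · have := ihk j hj' hje
        rw [hup] at this
        exact this

lemma ibp (g : E → ℝ) (f : V → ℝ) :
    ∑ v : V, f v * gdiv src tgt g v = ∑ e : E, g e * grad src tgt f e := by
  unfold gdiv grad
  have key : ∀ st : E → V, ∑ v : V, f v * (∑ e : E, if st e = v then g e else 0)
      = ∑ e : E, f (st e) * g e := by
    intro st
    have : ∀ v : V, f v * (∑ e : E, if st e = v then g e else 0)
        = ∑ e : E, (if st e = v then f v * g e else 0) := by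
      intro v
      rw [Finset.mul_sum]
      exact Finset.sum_congr rfl fun e _ => by split_ifs <;> ring
    rw [Finset.sum_congr rfl fun v _ => this v, Finset.sum_comm]
    refine Finset.sum_congr rfl fun e _ => ?_
    have : ∀ v : V, (if st e = v then f v * g e else 0) = (if st e = v then f (st e) * g e else 0) := by
      intro v; split_ifs with hc
      · rw [hc]
      · rfl
    rw [Finset.sum_congr rfl fun v _ => this v,
      Finset.sum_ite_eq Finset.univ (st e) (fun _ => f (st e) * g e)]
    simp
  calc ∑ v : V, f v * ((∑ e : E, if tgt e = v then g e else 0) - ∑ e : E, if src e = v then g e else 0)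
      = (∑ v : V, f v * (∑ e : E, if tgt e = v then g e else 0))
        - ∑ v : V, f v * (∑ e : E, if src e = v then g e else 0) := by
        rw [← Finset.sum_sub_distrib]
        exact Finset.sum_congr rfl fun v _ => by ring
    _ = (∑ e : E, f (tgt e) * g e) - ∑ e : E, f (src e) * g e := by rw [key tgt, key src]
    _ = ∑ e : E, g e * (f (tgt e) - f (src e)) := by
        rw [← Finset.sum_sub_distrib]
        exact Finset.sum_congr rfl fun e _ => by ring

lemma kkt_div (ht : 0 < t) (uopt : V → ℝ)
    (hopt : ∀ u : V → ℝ,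
      (1 / 2) * ∑ v : V, (u₀ v - uopt v) ^ 2 + t * ∑ e : E, |grad src tgt uopt e| ≤
        (1 / 2) * ∑ v : V, (u₀ v - u v) ^ 2 + t * ∑ e : E, |grad src tgt u e|)
    (g : E → ℝ) (hg : ∀ e, |g e| ≤ t)
    (hfix : ∀ k : E, src k ≠ tgt k → g k = clamp t (Kg src tgt u₀ g k)) :
    gdiv src tgt g = fun v => u₀ v - uopt v := by
  set u : V → ℝ := fun v => u₀ v - gdiv src tgt g v with hu
  have hKKT : ∀ k : E, g k * grad src tgt u k = t * |grad src tgt u k| := by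
    intro k
    rcases eq_or_ne (src k) (tgt k) with he | he
    · have : grad src tgt u k = 0 := by unfold grad; rw [he]; ring
      rw [this]; simp
    · have hk := hfix k he
      have hKg : Kg src tgt u₀ g k = grad src tgt u k / 2 + g k := by
        rw [Kg_eq src tgt u₀ g k he]
        unfold grad
        simp only [hu]
        try ring
      rw [hKg] at hk
      set γ := grad src tgt u k with hγ
      set m := γ / 2 + g k with hm
      have hgk := abs_le.mp (hg k)
      unfold clamp at hk
      rcases le_total m (-t) with h1 | h1
      · rw [min_eq_right (by linarith), max_eq_left (by linarith)] at hk
        have hγle : γ ≤ 0 := by rw [hm] at h1; linarith [hk]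
        rw [abs_of_nonpos hγle, hk]
        try ring
      · rcases le_total t m with h2 | h2
        · rw [min_eq_left h2, max_eq_right (by linarith)] at hk
          have hγge : 0 ≤ γ := by rw [hm] at h2; linarith [hk]
          rw [abs_of_nonneg hγge, hk]
          try ring
        · rw [min_eq_right h2, max_eq_right h1] at hk
          have : γ = 0 := by rw [hm] at hk; linarith
          rw [this]; simp
  -- u is a minimizer of the ROF functional
  have hmin : ∀ w : V → ℝ,
      (1 / 2) * ∑ v : V, (u₀ v - u v) ^ 2 + t * ∑ e : E, |grad src tgt u e| ≤
        (1 / 2) * ∑ v : V, (u₀ v - w v) ^ 2 + t * ∑ e : E, |grad src tgt w e| := by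
    intro w
    have h1 : ∑ v : V, (u₀ v - u v) * (u v - w v) = ∑ e : E, g e * grad src tgt (fun x => u x - w x) e := by
      have : ∀ v : V, (u₀ v - u v) * (u v - w v) = (u v - w v) * gdiv src tgt g v := by
        intro v
        simp only [hu]
        ring
      rw [Finset.sum_congr rfl fun v _ => this v, ibp src tgt]
    have h1' : ∑ v : V, (u₀ v - u v) * (u v - w v)
        = t * (∑ e : E, |grad src tgt u e|) - ∑ e : E, g e * grad src tgt w e := by
      rw [h1]
      have : ∀ e : E, g e * grad src tgt (fun x => u x - w x) e
          = g e * grad src tgt u e - g e * grad src tgt w e := by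
        intro e; unfold grad; ring
      rw [Finset.sum_congr rfl fun e _ => this e, Finset.sum_sub_distrib,
        Finset.sum_congr rfl fun e _ => hKKT e, ← Finset.mul_sum]
    have h2 : ∑ e : E, g e * grad src tgt w e ≤ t * ∑ e : E, |grad src tgt w e| := by
      rw [Finset.mul_sum]
      refine Finset.sum_le_sum fun e _ => ?_
      calc g e * grad src tgt w e ≤ |g e * grad src tgt w e| := le_abs_self _
        _ = |g e| * |grad src tgt w e| := abs_mul _ _
        _ ≤ t * |grad src tgt w e| := mul_le_mul_of_nonneg_right (hg e) (abs_nonneg _)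
    have h3 : (1 / 2) * ∑ v : V, (u₀ v - u v) ^ 2 + ∑ v : V, (u₀ v - u v) * (u v - w v)
        ≤ (1 / 2) * ∑ v : V, (u₀ v - w v) ^ 2 := by
      rw [Finset.mul_sum, Finset.mul_sum, ← Finset.sum_add_distrib]
      refine Finset.sum_le_sum fun v _ => ?_
      have key : ∀ a b c : ℝ, (1/2)*(a - b)^2 + (a - b)*(b - c) ≤ (1/2)*(a - c)^2 :=
        fun a b c => by nlinarith [sq_nonneg (b - c)]
      exact key (u₀ v) (u v) (w v)
    linarith [h1' ▸ h3]
  -- uniqueness of the minimizer forces u = uopt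
  have huopt : u = uopt := by
    have e1 := hmin uopt
    have e2 := hopt u
    set z : V → ℝ := fun v => (u v + uopt v) / 2 with hz
    have e3 := hopt z
    have hq : ∑ v : V, (u₀ v - z v) ^ 2
        = (∑ v : V, (u₀ v - u v) ^ 2) / 2 + (∑ v : V, (u₀ v - uopt v) ^ 2) / 2
          - (∑ v : V, (u v - uopt v) ^ 2) / 4 := by
      rw [Finset.sum_div, Finset.sum_div, Finset.sum_div, ← Finset.sum_add_distrib,
        ← Finset.sum_sub_distrib]
      refine Finset.sum_congr rfl fun v _ => ?_
      simp only [hz]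
      ring
    have hg2 : ∑ e : E, |grad src tgt z e|
        ≤ (∑ e : E, |grad src tgt u e|) / 2 + (∑ e : E, |grad src tgt uopt e|) / 2 := by
      rw [Finset.sum_div, Finset.sum_div, ← Finset.sum_add_distrib]
      refine Finset.sum_le_sum fun e _ => ?_
      have : grad src tgt z e = (grad src tgt u e + grad src tgt uopt e) / 2 := by
        unfold grad; simp only [hz]; ring
      rw [this]
      calc |(grad src tgt u e + grad src tgt uopt e) / 2|
          = |grad src tgt u e + grad src tgt uopt e| / 2 := by rw [abs_div]; norm_num
        _ ≤ (|grad src tgt u e| + |grad src tgt uopt e|) / 2 := by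
            have := abs_add_le (grad src tgt u e) (grad src tgt uopt e)
            linarith
        _ = |grad src tgt u e| / 2 + |grad src tgt uopt e| / 2 := by ring
    have hg2t := mul_le_mul_of_nonneg_left hg2 ht.le
    have hsum0 : ∑ v : V, (u v - uopt v) ^ 2 ≤ 0 := by linarith [e1, e2, e3, hq, hg2t]
    funext v
    have hnn : ∀ v ∈ Finset.univ, (0:ℝ) ≤ (u v - uopt v) ^ 2 := fun v _ => sq_nonneg _
    have : ∑ v : V, (u v - uopt v) ^ 2 = 0 := le_antisymm hsum0 (Finset.sum_nonneg hnn)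
    have := (Finset.sum_eq_zero_iff_of_nonneg hnn).mp this v (Finset.mem_univ v)
    have := pow_eq_zero_iff (two_ne_zero) |>.mp this
    linarith [this]
  funext v
  have : u v = uopt v := congrFun huopt v
  simp only [hu] at this
  linarith

lemma cont_gdiv_at (v : V) : Continuous fun h : E → ℝ => gdiv src tgt h v := by
  unfold gdiv
  refine Continuous.sub ?_ ?_ <;>
    refine continuous_finset_sum _ fun e _ => ?_
  · by_cases hc : tgt e = v
    · simpa [hc] using continuous_apply e
    · simp [hc]; exact continuous_const
  · by_cases hc : src e = v
    · simpa [hc] using continuous_apply e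
    · simp [hc]; exact continuous_const

lemma cont_gdiv : Continuous fun h : E → ℝ => gdiv src tgt h :=
  continuous_pi fun v => cont_gdiv_at src tgt v

lemma cont_Kg (k : E) : Continuous fun h : E → ℝ => Kg src tgt u₀ h k := by
  unfold Kg divWo
  have cconst : ∀ (w : V), Continuous fun h : E → ℝ =>
      gdiv src tgt h w + (if src k = w then h k else 0) - (if tgt k = w then h k else 0) := by
    intro w
    refine Continuous.sub (Continuous.add (cont_gdiv_at src tgt w) ?_) ?_
    · by_cases hc : src k = w
      · simpa [hc] using continuous_apply k
      · simp [hc]; exact continuous_const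
    · by_cases hc : tgt k = w
      · simpa [hc] using continuous_apply k
      · simp [hc]; exact continuous_const
  exact (((continuous_const.sub (cconst (tgt k))).sub
    (continuous_const.sub (cconst (src k)))).div_const 2)

lemma cont_clamp : Continuous fun x : ℝ => clamp t x := by
  unfold clamp
  exact continuous_const.max (continuous_const.min continuous_id)

lemma cont_Tk (k : E) : Continuous (Tk src tgt u₀ t k) := by
  refine continuous_pi fun j => ?_
  unfold Tk
  rcases eq_or_ne j k with rfl | hjk
  · simpa [Function.update_self, Function.comp_def] using (cont_clamp t).comp (cont_Kg src tgt u₀ j)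
  · simpa [Function.update_of_ne hjk] using continuous_apply j

lemma cont_Sw (ℓ : List E) : Continuous (Sw src tgt u₀ t ℓ) := by
  induction ℓ with
  | nil => exact continuous_id
  | cons k ℓ ih =>
    have : Sw src tgt u₀ t (k :: ℓ) = (Sw src tgt u₀ t ℓ) ∘ (Tk src tgt u₀ t k) := rfl
    rw [this]
    exact ih.comp (cont_Tk src tgt u₀ t k)

lemma cont_FF : Continuous (FF src tgt u₀ (V := V)) := by
  unfold FF
  refine continuous_finset_sum _ fun v _ => ?_
  exact (continuous_const.sub (cont_gdiv_at src tgt v)).pow 2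
end Aux

theorem stmt15 {V E : Type*} [Fintype V] [Fintype E] [DecidableEq V] [DecidableEq E]
    (src tgt : E → V) (hconn : GConnected src tgt) (u₀ uopt : V → ℝ) (t : ℝ) (ht : 0 < t)
    (L : List E) (hnd : L.Nodup) (hcov : ∀ e : E, e ∈ L)
    (hopt : ∀ u : V → ℝ,
      (1 / 2) * ∑ v : V, (u₀ v - uopt v) ^ 2 + t * ∑ e : E, |grad src tgt uopt e| ≤
        (1 / 2) * ∑ v : V, (u₀ v - u v) ^ 2 + t * ∑ e : E, |grad src tgt u e|) :
    ∀ g : E → ℝ, (∀ e : E, |g e| ≤ t) →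
      Filter.Tendsto
        (fun n : ℕ =>
          gdiv src tgt ((fun h : E → ℝ => L.foldl (fun h' k => Tk src tgt u₀ t k h') h)^[n] g))
        Filter.atTop (nhds (fun v => u₀ v - uopt v)) := by
  intro g hg
  classical
  set S1 : (E → ℝ) → (E → ℝ) := fun h => L.foldl (fun h' k => Tk src tgt u₀ t k h') h with hS1
  have hS1Sw : S1 = Sw src tgt u₀ t L := rfl
  set seq : ℕ → E → ℝ := fun n => S1^[n] g with hseq
  have hsucc : ∀ n, seq (n + 1) = S1 (seq n) := fun n => Function.iterate_succ_apply' S1 n g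
  have hC : ∀ n, ∀ e, |seq n e| ≤ t := by
    intro n
    induction n with
    | zero => exact hg
    | succ n ih =>
      rw [hsucc, hS1Sw]
      exact Sw_mem src tgt u₀ t ht L _ ih
  have hdec : ∀ n, FF src tgt u₀ (seq (n + 1)) ≤ FF src tgt u₀ (seq n) := by
    intro n
    rw [hsucc, hS1Sw]
    exact FF_Sw_le src tgt u₀ t ht L _ (hC n)
  have hanti : Antitone fun n => FF src tgt u₀ (seq n) := antitone_nat_of_succ_le hdec
  have hbdd : BddBelow (Set.range fun n => FF src tgt u₀ (seq n)) := by
    refine ⟨0, fun x hx => ?_⟩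
    obtain ⟨n, rfl⟩ := hx
    exact Finset.sum_nonneg fun v _ => sq_nonneg _
  have hFlim : Filter.Tendsto (fun n => FF src tgt u₀ (seq n)) Filter.atTop
      (nhds (⨅ n, FF src tgt u₀ (seq n))) := tendsto_atTop_ciInf hanti hbdd
  set c := ⨅ n, FF src tgt u₀ (seq n) with hc
  have hcompact : IsCompact {h : E → ℝ | ∀ e, h e ∈ Set.Icc (-t) t} := by
    have hset : {h : E → ℝ | ∀ e, h e ∈ Set.Icc (-t) t}
        = Set.pi Set.univ (fun _ : E => Set.Icc (-t) t) := by
      ext h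
      simp only [Set.mem_setOf_eq, Set.mem_univ_pi]
    rw [hset]
    exact isCompact_univ_pi fun _ => isCompact_Icc
  refine Filter.tendsto_of_subseq_tendsto fun ns hns => ?_
  have hmem : ∀ i, seq (ns i) ∈ {h : E → ℝ | ∀ e, h e ∈ Set.Icc (-t) t} :=
    fun i e => Set.mem_Icc.mpr (abs_le.mp (hC (ns i) e))
  obtain ⟨gs, hgsmem, φ, hφ, hconv⟩ := hcompact.tendsto_subseq hmem
  have hidx : Filter.Tendsto (fun i => ns (φ i)) Filter.atTop Filter.atTop :=
    hns.comp hφ.tendsto_atTop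
  have hgsC : ∀ e, |gs e| ≤ t := fun e => abs_le.mpr (Set.mem_Icc.mp (hgsmem e))
  have hF1 : Filter.Tendsto (fun i => FF src tgt u₀ (seq (ns (φ i)))) Filter.atTop
      (nhds (FF src tgt u₀ gs)) := (cont_FF src tgt u₀).continuousAt.tendsto.comp hconv
  have hF2 : Filter.Tendsto (fun i => FF src tgt u₀ (seq (ns (φ i)))) Filter.atTop (nhds c) :=
    hFlim.comp hidx
  have hFgs : FF src tgt u₀ gs = c := tendsto_nhds_unique hF1 hF2
  have hSconv : Filter.Tendsto (fun i => S1 (seq (ns (φ i)))) Filter.atTop (nhds (S1 gs)) := by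
    rw [hS1Sw]
    exact (cont_Sw src tgt u₀ t L).continuousAt.tendsto.comp hconv
  have hF3 : Filter.Tendsto (fun i => FF src tgt u₀ (S1 (seq (ns (φ i))))) Filter.atTop
      (nhds (FF src tgt u₀ (S1 gs))) := (cont_FF src tgt u₀).continuousAt.tendsto.comp hSconv
  have hF4 : Filter.Tendsto (fun i => FF src tgt u₀ (S1 (seq (ns (φ i))))) Filter.atTop (nhds c) := by
    have heq : (fun i => FF src tgt u₀ (S1 (seq (ns (φ i)))))
        = fun i => FF src tgt u₀ (seq (ns (φ i) + 1)) := by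
      funext i
      rw [hsucc]
    rw [heq]
    exact hFlim.comp ((Filter.tendsto_add_atTop_nat 1).comp hidx)
  have hFS1gs : FF src tgt u₀ (S1 gs) = FF src tgt u₀ gs := by
    rw [hFgs]
    exact tendsto_nhds_unique hF3 hF4
  have hSweq : FF src tgt u₀ (Sw src tgt u₀ t L gs) = FF src tgt u₀ gs := by
    rw [← hS1Sw]
    exact hFS1gs
  obtain ⟨-, hkkt⟩ := Sw_eq_analysis src tgt u₀ t ht L hnd gs hgsC hSweq
  have hfix : ∀ k : E, src k ≠ tgt k → gs k = clamp t (Kg src tgt u₀ gs k) :=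
    fun k hk => hkkt k (hcov k) hk
  have hdiv : gdiv src tgt gs = fun v => u₀ v - uopt v :=
    kkt_div src tgt u₀ t ht uopt hopt gs hgsC hfix
  refine ⟨φ, ?_⟩
  have hfin : Filter.Tendsto (fun i => gdiv src tgt (seq (ns (φ i)))) Filter.atTop
      (nhds (gdiv src tgt gs)) := (cont_gdiv src tgt).continuousAt.tendsto.comp hconv
  rw [hdiv] at hfin
  exact hfin
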